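/- (Theorem 1, ergodic bound.) Under the stated setup, for every α* ∈ ℝⁿ with Z·α* = 0, every ω* ∈ ℝ^p, and every natural number T ≥ 2d+1: (T+1)·(Φ(ᾱ(T+1)) − Φ(α*) + 2‖ω*‖·‖Z·ᾱ(T+1)‖) ≤ 4(1+d)·λ_max(S⁻¹)·‖ω*‖² + (1+d)·ω(0)ᵀS⁻¹ω(0) + ½·(α* − α(0))ᵀC⁻¹(α* − α(0)) + Γ/2. -/

import Mathlib

open Matrix Finset

/-- The quadratic form `‖x‖²_A = xᵀ A x`. -/
noncomputable def qf {k : ℕ} (A : Matrix (Fin k) (Fin k) ℝ) (x : Fin k → ℝ) : ℝ :=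
  x ⬝ᵥ (A *ᵥ x)

/-- The largest eigenvalue of a real symmetric matrix, as the supremum of the
quadratic form over Euclidean unit vectors. -/
noncomputable def lamMax {k : ℕ} (A : Matrix (Fin k) (Fin k) ℝ) : ℝ :=
  sSup {r : ℝ | ∃ x : Fin k → ℝ, x ⬝ᵥ x = 1 ∧ r = x ⬝ᵥ (A *ᵥ x)}

namespace AsynAux
variable {k m : ℕ}
lemma dot_symm (A : Matrix (Fin k) (Fin k) ℝ) (hA : Aᵀ = A) (x y : Fin k → ℝ) :
    x ⬝ᵥ (A *ᵥ y) = y ⬝ᵥ (A *ᵥ x) := by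
  rw [Matrix.dotProduct_mulVec]
  conv_lhs => rw [← hA]
  rw [Matrix.vecMul_transpose, dotProduct_comm]

lemma tdot (Z : Matrix (Fin k) (Fin m) ℝ) (x : Fin m → ℝ) (u : Fin k → ℝ) :
    x ⬝ᵥ (Zᵀ *ᵥ u) = (Z *ᵥ x) ⬝ᵥ u := by
  rw [Matrix.dotProduct_mulVec, Matrix.vecMul_transpose]

lemma qf_add (A : Matrix (Fin k) (Fin k) ℝ) (hA : Aᵀ = A) (x y : Fin k → ℝ) :
    qf A (x + y) = qf A x + 2 * (x ⬝ᵥ (A *ᵥ y)) + qf A y := by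
  have h := dot_symm A hA y x
  simp only [qf, Matrix.mulVec_add, dotProduct_add, add_dotProduct]
  rw [h]; ring

lemma qf_sub (A : Matrix (Fin k) (Fin k) ℝ) (hA : Aᵀ = A) (x y : Fin k → ℝ) :
    qf A (x - y) = qf A x - 2 * (x ⬝ᵥ (A *ᵥ y)) + qf A y := by
  have h := dot_symm A hA y x
  simp only [qf, Matrix.mulVec_sub, dotProduct_sub, sub_dotProduct]
  rw [h]; ring

lemma qf_nonneg {A : Matrix (Fin k) (Fin k) ℝ} (h : A.PosSemidef) (x : Fin k → ℝ) :
    0 ≤ qf A x := by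
  have := h.dotProduct_mulVec_nonneg x; simpa [qf] using this

lemma qf_smul (A : Matrix (Fin k) (Fin k) ℝ) (c : ℝ) (x : Fin k → ℝ) :
    qf A (c • x) = c ^ 2 * qf A x := by
  simp [qf, Matrix.mulVec_smul, smul_dotProduct, dotProduct_smul]; ring

lemma strong_prox (A : Matrix (Fin k) (Fin k) ℝ) (hA : Aᵀ = A) (hpsd : A.PosSemidef)
    (Hr : (Fin k → ℝ) → ℝ) (hr : ConvexOn ℝ Set.univ Hr) (y a' : Fin k → ℝ)
    (hmin : ∀ v, Hr a' + 1/2 * qf A (a' - y) ≤ Hr v + 1/2 * qf A (v - y)) (v : Fin k → ℝ) :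
    Hr a' + 1/2 * qf A (a' - y) + 1/2 * qf A (v - a') ≤ Hr v + 1/2 * qf A (v - y) := by
  set c := qf A (v - a') with hc
  have hc0 : 0 ≤ c := qf_nonneg hpsd _
  set B := (a' - y) ⬝ᵥ (A *ᵥ (v - a')) with hB
  have hqv : qf A (v - y) = qf A (a' - y) + 2*B + c := by
    have he : v - y = (a' - y) + (v - a') := by abel
    rw [he, qf_add A hA, ← hB, ← hc]
  have key : ∀ θ : ℝ, 0 < θ → θ ≤ 1 → Hr a' - Hr v ≤ B + θ * (c/2) := by
    intro θ hθ0 hθ1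
    have hmid := hmin ((1-θ) • a' + θ • v)
    have hconv := hr.2 (Set.mem_univ a') (Set.mem_univ v)
      (show (0:ℝ) ≤ 1 - θ by linarith) (le_of_lt hθ0) (show (1-θ) + θ = 1 by ring)
    have hqid : qf A ((1-θ) • a' + θ • v - y) = qf A (a' - y) + 2*θ*B + θ^2 * c := by
      have he : (1-θ) • a' + θ • v - y = (a' - y) + θ • (v - a') := by
        ext i; simp [Pi.smul_apply, smul_eq_mul]; ring
      rw [he, qf_add A hA, qf_smul, Matrix.mulVec_smul, dotProduct_smul,
        smul_eq_mul, ← hB, ← hc]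
      ring
    rw [hqid] at hmid
    simp only [smul_eq_mul] at hconv
    have h3 : θ * (Hr a' - Hr v) ≤ θ * (B + θ * (c/2)) := by nlinarith [hmid, hconv]
    exact (mul_le_mul_iff_right₀ hθ0).mp h3
  have h2 : Hr a' - Hr v ≤ B := by
    refine le_of_forall_pos_le_add fun ε hε => ?_
    have hden : (0:ℝ) < c + ε := by linarith
    have h := key (ε / (c + ε)) (by positivity) (by rw [div_le_one hden]; linarith)
    have hbd : (ε / (c + ε)) * (c/2) ≤ ε := by
      rw [div_mul_eq_mul_div, div_le_iff₀ hden]; nlinarith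
    linarith
  linarith [hqv]

lemma dual_id (S : Matrix (Fin k) (Fin k) ℝ) (hSt : Sᵀ = S) (hSiT : S⁻¹ᵀ = S⁻¹)
    (hinv : S⁻¹ * S = 1) (u vL wL wh : Fin k → ℝ) :
    -(u ⬝ᵥ (wL + S *ᵥ vL))
      = -(u ⬝ᵥ wh) - 1/2 * qf S⁻¹ (wL + S *ᵥ u - wh) + 1/2 * qf S⁻¹ (wL - wh)
        - 1/2 * qf S vL + 1/2 * qf S (u - vL) := by
  have hSiu : S⁻¹ *ᵥ (S *ᵥ u) = u := by
    rw [Matrix.mulVec_mulVec, hinv, Matrix.one_mulVec]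
  have e3 : qf S⁻¹ (S *ᵥ u) = u ⬝ᵥ (S *ᵥ u) := by
    rw [qf, hSiu, dotProduct_comm]
  have e2 : qf S⁻¹ (wL + S *ᵥ u - wh)
      = qf S⁻¹ (wL - wh) + 2 * ((wL - wh) ⬝ᵥ u) + u ⬝ᵥ (S *ᵥ u) := by
    have e1 : wL + S *ᵥ u - wh = (wL - wh) + S *ᵥ u := by abel
    rw [e1, qf_add _ hSiT, hSiu, e3]
  have e4 : qf S (u - vL) = qf S u - 2 * (u ⬝ᵥ (S *ᵥ vL)) + qf S vL :=
    qf_sub S hSt u vL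
  have e5 : u ⬝ᵥ (wL + S *ᵥ vL) = u ⬝ᵥ wL + u ⬝ᵥ (S *ᵥ vL) := dotProduct_add _ _ _
  have e6 : (wL - wh) ⬝ᵥ u = wL ⬝ᵥ u - wh ⬝ᵥ u := sub_dotProduct _ _ _
  have e7 : wL ⬝ᵥ u = u ⬝ᵥ wL := dotProduct_comm _ _
  have e8 : wh ⬝ᵥ u = u ⬝ᵥ wh := dotProduct_comm _ _
  have e9 : qf S u = u ⬝ᵥ (S *ᵥ u) := rfl
  rw [e2, e4, e5, e6, e7, e8, e9]
  ring

lemma per_step {n p : ℕ} (Z : Matrix (Fin p) (Fin n) ℝ)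
    (C Hm : Matrix (Fin n) (Fin n) ℝ) (S : Matrix (Fin p) (Fin p) ℝ)
    (hCiT : C⁻¹ᵀ = C⁻¹) (hCipsd : (C⁻¹).PosSemidef) (hCinv : C⁻¹ * C = 1)
    (hSt : Sᵀ = S) (hSiT : S⁻¹ᵀ = S⁻¹) (hSinv : S⁻¹ * S = 1)
    (Hs Hr : (Fin n → ℝ) → ℝ) (gs : (Fin n → ℝ) → (Fin n → ℝ))
    (hconv_s : ∀ a b : Fin n → ℝ, Hs a + gs a ⬝ᵥ (b - a) ≤ Hs b)
    (hsmooth : ∀ a b : Fin n → ℝ, Hs b ≤ Hs a + gs a ⬝ᵥ (b - a) + 1 / 2 * qf Hm (b - a))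
    (hr : ConvexOn ℝ Set.univ Hr)
    (a a' aL : Fin n → ℝ) (wL wh : Fin p → ℝ)
    (hmin : ∀ v, Hr a' + 1/2 * qf C⁻¹ (a' - (a - C *ᵥ (gs a + Zᵀ *ᵥ wL + (Zᵀ*S*Z) *ᵥ aL)))
      ≤ Hr v + 1/2 * qf C⁻¹ (v - (a - C *ᵥ (gs a + Zᵀ *ᵥ wL + (Zᵀ*S*Z) *ᵥ aL))))
    (αs : Fin n → ℝ) (hαs : Z *ᵥ αs = 0) :
    Hs a' + Hr a' - (Hs αs + Hr αs) + (Z *ᵥ a') ⬝ᵥ wh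
      ≤ 1/2 * qf Hm (a' - a) - 1/2 * qf C⁻¹ (a' - a)
        + 1/2 * qf (Zᵀ*S*Z) (a' - aL) - 1/2 * qf (Zᵀ*S*Z) aL
        + (1/2 * qf C⁻¹ (αs - a) - 1/2 * qf C⁻¹ (αs - a'))
        + (1/2 * qf S⁻¹ (wL - wh) - 1/2 * qf S⁻¹ (wL + (S*Z) *ᵥ a' - wh)) := by
  set g : Fin n → ℝ := gs a + Zᵀ *ᵥ wL + (Zᵀ*S*Z) *ᵥ aL with hg
  have h1 := strong_prox C⁻¹ hCiT hCipsd Hr hr (a - C *ᵥ g) a' hmin αs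
  have hexp : ∀ x : Fin n → ℝ, qf C⁻¹ (x - (a - C *ᵥ g))
      = qf C⁻¹ (x - a) + 2*((x - a) ⬝ᵥ g) + qf C⁻¹ (C *ᵥ g) := by
    intro x
    have he : x - (a - C *ᵥ g) = (x - a) + C *ᵥ g := by abel
    rw [he, qf_add C⁻¹ hCiT, Matrix.mulVec_mulVec, hCinv, Matrix.one_mulVec]
  rw [hexp a', hexp αs] at h1
  have hsm := hsmooth a a'
  have hcv := hconv_s a αs
  -- mulVec rewritings
  have hmv : (Zᵀ*S*Z) *ᵥ aL = Zᵀ *ᵥ (S *ᵥ (Z *ᵥ aL)) := by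
    rw [Matrix.mulVec_mulVec, Matrix.mulVec_mulVec, Matrix.mul_assoc]
  have hc3 : (S*Z) *ᵥ a' = S *ᵥ (Z *ᵥ a') := (Matrix.mulVec_mulVec a' S Z).symm
  -- dot product splitting
  have hdot : (αs - a) ⬝ᵥ g - (a' - a) ⬝ᵥ g = (αs - a') ⬝ᵥ g := by
    rw [← sub_dotProduct]
    congr 1
    abel
  have hsplit : (αs - a') ⬝ᵥ g
      = gs a ⬝ᵥ (αs - a) - gs a ⬝ᵥ (a' - a)
        - ((Z *ᵥ a') ⬝ᵥ (wL + S *ᵥ (Z *ᵥ aL))) := by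
    rw [hg, dotProduct_add, dotProduct_add, hmv, tdot, tdot]
    have hz : Z *ᵥ (αs - a') = -(Z *ᵥ a') := by
      rw [Matrix.mulVec_sub, hαs, zero_sub]
    rw [hz, neg_dotProduct, neg_dotProduct, dotProduct_add]
    have hgs : (αs - a') ⬝ᵥ gs a = gs a ⬝ᵥ (αs - a) - gs a ⬝ᵥ (a' - a) := by
      rw [dotProduct_comm, ← dotProduct_sub]
      congr 1
      abel
    rw [hgs]
    ring
  -- the dual identity
  have hdual := dual_id S hSt hSiT hSinv (Z *ᵥ a') (Z *ᵥ aL) wL wh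
  -- convert qf S (Z *ᵥ x) into qf (Zᵀ*S*Z) x
  have hq1 : qf S (Z *ᵥ aL) = qf (Zᵀ*S*Z) aL := by
    rw [qf, qf, hmv, tdot]
  have hq2 : qf S (Z *ᵥ a' - Z *ᵥ aL) = qf (Zᵀ*S*Z) (a' - aL) := by
    rw [← Matrix.mulVec_sub, qf, qf]
    have hmv2 : (Zᵀ*S*Z) *ᵥ (a' - aL) = Zᵀ *ᵥ (S *ᵥ (Z *ᵥ (a' - aL))) := by
      rw [Matrix.mulVec_mulVec, Matrix.mulVec_mulVec, Matrix.mul_assoc]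
    rw [hmv2, tdot]
  rw [hq1, hq2] at hdual
  rw [hc3]
  linarith [h1, hsm, hcv, hdot, hsplit, hdual]

lemma dot_self_nonneg (x : Fin k → ℝ) : 0 ≤ x ⬝ᵥ x :=
  Finset.sum_nonneg fun i _ => mul_self_nonneg _

lemma lamMax_bdd (A : Matrix (Fin k) (Fin k) ℝ) :
    BddAbove {r : ℝ | ∃ x : Fin k → ℝ, x ⬝ᵥ x = 1 ∧ r = x ⬝ᵥ (A *ᵥ x)} := by
  refine ⟨∑ i, ∑ j, |A i j|, ?_⟩
  rintro r ⟨x, hx, rfl⟩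
  have habs : ∀ j, |x j| ≤ 1 := by
    intro j
    have h1 : x j * x j ≤ 1 := by
      rw [← hx]
      exact Finset.single_le_sum (f := fun i => x i * x i)
        (fun i _ => mul_self_nonneg _) (Finset.mem_univ j)
    nlinarith [abs_nonneg (x j), sq_abs (x j)]
  have hrepr : x ⬝ᵥ (A *ᵥ x) = ∑ i, x i * ∑ j, A i j * x j := rfl
  rw [hrepr]
  refine Finset.sum_le_sum fun i _ => ?_
  calc x i * (∑ j, A i j * x j) ≤ |x i * (∑ j, A i j * x j)| := le_abs_self _
    _ = |x i| * |∑ j, A i j * x j| := abs_mul _ _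
    _ ≤ 1 * |∑ j, A i j * x j| :=
        mul_le_mul_of_nonneg_right (habs i) (abs_nonneg _)
    _ ≤ ∑ j, |A i j| := by
        rw [one_mul]
        refine le_trans (Finset.abs_sum_le_sum_abs _ _) ?_
        refine Finset.sum_le_sum fun j _ => ?_
        rw [abs_mul]
        nlinarith [habs j, abs_nonneg (A i j)]

lemma qf_le_lamMax (A : Matrix (Fin k) (Fin k) ℝ) (x : Fin k → ℝ) :
    qf A x ≤ lamMax A * (x ⬝ᵥ x) := by
  by_cases h0 : x ⬝ᵥ x = 0
  · have hx : x = 0 := dotProduct_self_eq_zero.mp h0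
    subst hx
    simp [qf]
  · have hpos : 0 < x ⬝ᵥ x := lt_of_le_of_ne (dot_self_nonneg x) (Ne.symm h0)
    set c := Real.sqrt (x ⬝ᵥ x) with hcdef
    have hc : 0 < c := Real.sqrt_pos.mpr hpos
    have hc2 : c ^ 2 = x ⬝ᵥ x := Real.sq_sqrt hpos.le
    set y := c⁻¹ • x with hy
    have hyy : y ⬝ᵥ y = 1 := by
      rw [hy, smul_dotProduct, dotProduct_smul, smul_eq_mul, smul_eq_mul,
        ← hc2]
      field_simp
    have hle : qf A y ≤ lamMax A := le_csSup (lamMax_bdd A) ⟨y, hyy, rfl⟩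
    have hqy : qf A y = (c⁻¹)^2 * qf A x := by
      rw [hy, qf, Matrix.mulVec_smul, smul_dotProduct, dotProduct_smul,
        smul_eq_mul, smul_eq_mul, ← qf]
      ring
    rw [hqy] at hle
    have h2 := mul_le_mul_of_nonneg_left hle (le_of_lt (by positivity : (0:ℝ) < c^2))
    calc qf A x = c^2 * ((c⁻¹)^2 * qf A x) := by field_simp
      _ ≤ c^2 * lamMax A := h2
      _ = lamMax A * (x ⬝ᵥ x) := by rw [hc2]; ring

lemma lamMax_nonneg_of_pos {A : Matrix (Fin k) (Fin k) ℝ} (hA : A.PosSemidef) (hk : 0 < k) :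
    0 ≤ lamMax A := by
  have e : Fin k := ⟨0, hk⟩
  set x : Fin k → ℝ := Pi.single e 1 with hx
  have hxx : x ⬝ᵥ x = 1 := by
    rw [hx, dotProduct_single]
    simp
  have h1 : qf A x ≤ lamMax A := le_csSup (lamMax_bdd A) ⟨x, hxx, rfl⟩
  have h2 : 0 ≤ qf A x := by have := hA.dotProduct_mulVec_nonneg x; simpa [qf] using this
  linarith

lemma sum_dot {ι : Type*} (s : Finset ι) (v : ι → Fin k → ℝ) (w : Fin k → ℝ) :
    (∑ i ∈ s, v i) ⬝ᵥ w = ∑ i ∈ s, (v i ⬝ᵥ w) := by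
  simp only [dotProduct, Finset.sum_apply, Finset.sum_mul]
  exact Finset.sum_comm

lemma dot_sum {ι : Type*} (s : Finset ι) (w : Fin k → ℝ) (v : ι → Fin k → ℝ) :
    w ⬝ᵥ (∑ i ∈ s, v i) = ∑ i ∈ s, (w ⬝ᵥ v i) := by
  rw [dotProduct_comm, sum_dot]
  exact Finset.sum_congr rfl fun i _ => dotProduct_comm _ _

lemma delayed_sum (E : ℕ → ℝ) (hE : ∀ s, 0 ≤ E s) (d T : ℕ) (hdT : d ≤ T) :
    ∑ t ∈ Finset.range (T+1), (E (t - d) - E (t+1)) ≤ (d+1 : ℝ) * E 0 := by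
  rw [Finset.sum_sub_distrib]
  have e1 : ∑ t ∈ Finset.range (T+1), E (t - d)
      = ∑ t ∈ Finset.Ico 0 d, E (t-d) + ∑ t ∈ Finset.Ico d (T+1), E (t-d) := by
    rw [Finset.sum_Ico_consecutive _ (Nat.zero_le d) (by omega : d ≤ T+1),
      Finset.range_eq_Ico]
  have e2 : ∑ t ∈ Finset.Ico 0 d, E (t-d) = (d : ℝ) * E 0 := by
    rw [← Finset.range_eq_Ico]
    rw [Finset.sum_congr rfl (fun i hi => by
      rw [Nat.sub_eq_zero_of_le (le_of_lt (Finset.mem_range.mp hi))])]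
    simp [mul_comm]
  have e3 : ∑ t ∈ Finset.Ico d (T+1), E (t-d) = ∑ i ∈ Finset.range (T+1-d), E i := by
    rw [Finset.sum_Ico_eq_sum_range]
    exact Finset.sum_congr rfl fun i _ => by congr 1; omega
  have h2 : ∑ i ∈ Finset.range (T-d), E (i+1) ≤ ∑ t ∈ Finset.range (T+1), E (t+1) :=
    Finset.sum_le_sum_of_subset_of_nonneg
      (Finset.range_subset_range.mpr (by omega)) (fun i _ _ => hE _)
  have h3 : ∑ i ∈ Finset.range (T+1-d), E i = E 0 + ∑ i ∈ Finset.range (T-d), E (i+1) := by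
    have e : T+1-d = (T-d)+1 := by omega
    rw [e, Finset.sum_range_succ']
    ring
  rw [e1, e2, e3, h3]
  linarith

lemma qf_sum_le (M : Matrix (Fin k) (Fin k) ℝ) (hMt : Mᵀ = M) (hM : M.PosSemidef)
    {ι : Type*} (s : Finset ι) (v : ι → Fin k → ℝ) :
    qf M (∑ i ∈ s, v i) ≤ (s.card : ℝ) * ∑ i ∈ s, qf M (v i) := by
  have cross : ∀ i j, (v i) ⬝ᵥ (M *ᵥ (v j)) ≤ (qf M (v i) + qf M (v j)) / 2 := by
    intro i j
    have h0 : 0 ≤ qf M (v i - v j) := qf_nonneg hM _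
    have hexp : qf M (v i - v j)
        = qf M (v i) - 2 * ((v i) ⬝ᵥ (M *ᵥ (v j))) + qf M (v j) := by
      have h := dot_symm M hMt (v j) (v i)
      simp only [qf, Matrix.mulVec_sub, dotProduct_sub, sub_dotProduct]
      rw [h]; ring
    linarith [hexp ▸ h0]
  have hm : M *ᵥ (∑ i ∈ s, v i) = ∑ i ∈ s, M *ᵥ v i := by
    have := map_sum (Matrix.mulVecLin M) v s
    simpa only [Matrix.mulVecLin_apply] using this
  have hexpand : qf M (∑ i ∈ s, v i) = ∑ i ∈ s, ∑ j ∈ s, (v i) ⬝ᵥ (M *ᵥ (v j)) := by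
    rw [qf, hm, sum_dot]
    exact Finset.sum_congr rfl fun i _ => dot_sum _ _ _
  rw [hexpand]
  calc ∑ i ∈ s, ∑ j ∈ s, (v i) ⬝ᵥ (M *ᵥ (v j))
      ≤ ∑ i ∈ s, ∑ j ∈ s, (qf M (v i) + qf M (v j)) / 2 :=
        Finset.sum_le_sum fun i _ => Finset.sum_le_sum fun j _ => cross i j
    _ = (s.card : ℝ) * ∑ i ∈ s, qf M (v i) := by
        have hi : ∀ i, ∑ j ∈ s, (qf M (v i) + qf M (v j)) / 2
            = ((s.card : ℝ) * qf M (v i) + ∑ j ∈ s, qf M (v j)) / 2 := fun i => by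
          rw [← Finset.sum_div, Finset.sum_add_distrib, Finset.sum_const, nsmul_eq_mul]
        rw [Finset.sum_congr rfl fun i _ => hi i, ← Finset.sum_div,
          Finset.sum_add_distrib, ← Finset.mul_sum, Finset.sum_const, nsmul_eq_mul]
        ring

lemma window_repr (α : ℕ → Fin k → ℝ) (a b : ℕ) (hab : a ≤ b) :
    α b - α a = ∑ i ∈ Finset.Ico a b, (α (i+1) - α i) := by
  rw [Finset.sum_Ico_eq_sum_range]
  have h := Finset.sum_range_sub (f := fun i => α (a + i)) (b - a)
  have e : a + (b - a) = b := by omega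
  rw [e, Nat.add_zero] at h
  rw [← h]
  exact Finset.sum_congr rfl fun i _ => by rw [Nat.add_assoc]

lemma double_count (q : ℕ → ℝ) (hq : ∀ s, 0 ≤ q s) (d T : ℕ) :
    ∑ t ∈ Finset.range (T+1), ∑ s ∈ Finset.Ico (t-d) (t+1), q s
      ≤ (d+1 : ℝ) * ∑ s ∈ Finset.range (T+1), q s := by
  have hsub : ∀ t ∈ Finset.range (T+1), ∑ s ∈ Finset.Ico (t-d) (t+1), q s
      = ∑ s ∈ Finset.range (T+1), if s ∈ Finset.Ico (t-d) (t+1) then q s else 0 := by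
    intro t ht
    rw [Finset.sum_ite_mem]
    congr 1
    refine (Finset.inter_eq_right.mpr fun s hs => ?_).symm
    simp only [Finset.mem_Ico] at hs
    simp only [Finset.mem_range]
    have := Finset.mem_range.mp ht
    omega
  rw [Finset.sum_congr rfl hsub, Finset.sum_comm]
  have inner : ∀ s, ∑ t ∈ Finset.range (T+1),
      (if s ∈ Finset.Ico (t-d) (t+1) then q s else 0) ≤ (d+1:ℝ) * q s := by
    intro s
    rw [← Finset.sum_filter]
    rw [Finset.sum_const, nsmul_eq_mul]
    have hcard : ((Finset.range (T+1)).filter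
        (fun t => s ∈ Finset.Ico (t-d) (t+1))).card ≤ d+1 := by
      have hsubset : (Finset.range (T+1)).filter (fun t => s ∈ Finset.Ico (t-d) (t+1))
          ⊆ Finset.Icc s (s+d) := by
        intro t ht
        simp only [Finset.mem_filter, Finset.mem_range, Finset.mem_Ico,
          Finset.mem_Icc] at *
        omega
      calc _ ≤ (Finset.Icc s (s+d)).card := Finset.card_le_card hsubset
        _ = d+1 := by rw [Nat.card_Icc]; omega
    exact mul_le_mul_of_nonneg_right (by exact_mod_cast hcard) (hq s)
  calc ∑ s ∈ Finset.range (T+1), ∑ t ∈ Finset.range (T+1),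
        (if s ∈ Finset.Ico (t-d) (t+1) then q s else 0)
      ≤ ∑ s ∈ Finset.range (T+1), (d+1:ℝ) * q s :=
        Finset.sum_le_sum fun s _ => inner s
    _ = (d+1:ℝ) * ∑ s ∈ Finset.range (T+1), q s := by rw [Finset.mul_sum]

lemma qf_sub_le {A : Matrix (Fin k) (Fin k) ℝ} (hA : Aᵀ = A) (h : A.PosSemidef)
    (x y : Fin k → ℝ) : qf A (x - y) ≤ 2 * qf A x + 2 * qf A y := by
  have h1 := qf_nonneg h (x + y)
  rw [qf_add A hA] at h1
  rw [qf_sub A hA]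
  linarith

end AsynAux
open AsynAux

set_option maxHeartbeats 1000000 in
/-- Theorem 1: ergodic bound for the Asyn-DDPG algorithm. -/
theorem asyn_ddpg_ergodic_bound
    (n p : ℕ) (Z : Matrix (Fin p) (Fin n) ℝ)
    (C Hm : Matrix (Fin n) (Fin n) ℝ) (S : Matrix (Fin p) (Fin p) ℝ)
    (hC : C.PosDef) (hHm : Hm.PosDef) (hS : S.PosDef)
    (d : ℕ) (hd : 1 ≤ d)
    (Hs Hr : (Fin n → ℝ) → ℝ) (gs : (Fin n → ℝ) → (Fin n → ℝ))
    (hconv_s : ∀ a b : Fin n → ℝ, Hs a + gs a ⬝ᵥ (b - a) ≤ Hs b)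
    (hsmooth : ∀ a b : Fin n → ℝ, Hs b ≤ Hs a + gs a ⬝ᵥ (b - a) + 1 / 2 * qf Hm (b - a))
    (hr : ConvexOn ℝ Set.univ Hr)
    (α : ℕ → Fin n → ℝ) (ω : ℕ → Fin p → ℝ)
    (hα : ∀ t : ℕ, ∀ v : Fin n → ℝ,
      Hr (α (t + 1)) + 1 / 2 * qf C⁻¹ (α (t + 1) -
          (α t - C *ᵥ (gs (α t) + Zᵀ *ᵥ ω (t - d) + (Zᵀ * S * Z) *ᵥ α (t - d))))
        ≤ Hr v + 1 / 2 * qf C⁻¹ (v -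
          (α t - C *ᵥ (gs (α t) + Zᵀ *ᵥ ω (t - d) + (Zᵀ * S * Z) *ᵥ α (t - d)))))
    (hω : ∀ t : ℕ, ω (t + 1) = ω (t - d) + (S * Z) *ᵥ α (t + 1))
    (hstep1 : (C⁻¹ - Hm - Zᵀ * (((1 + d : ℝ)) ^ 2 • S) * Z).PosSemidef)
    (hstep2 : (C⁻¹ - Zᵀ * S * Z).PosDef)
    (κ : ℝ) (hκ : 0 ≤ κ) (hbound : ∀ t : ℕ, qf (Zᵀ * S * Z) (α t) ≤ κ ^ 2)
    (αs : Fin n → ℝ) (hαs : Z *ᵥ αs = 0) (ωs : Fin p → ℝ)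
    (T : ℕ) (hT : 2 * d + 1 ≤ T)
    (abar : Fin n → ℝ)
    (habar : abar = (T + 1 : ℝ)⁻¹ • ∑ t ∈ Finset.range (T + 1), α (t + 1)) :
    (T + 1 : ℝ) * ((Hs abar + Hr abar) - (Hs αs + Hr αs)
        + 2 * Real.sqrt (ωs ⬝ᵥ ωs) * Real.sqrt ((Z *ᵥ abar) ⬝ᵥ (Z *ᵥ abar)))
      ≤ 4 * (1 + d : ℝ) * lamMax S⁻¹ * (ωs ⬝ᵥ ωs)
        + (1 + d : ℝ) * qf S⁻¹ (ω 0)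
        + 1 / 2 * qf C⁻¹ (αs - α 0)
        + 4 * (d : ℝ) * κ ^ 2 / 2 := by
  classical
  -- basic matrix facts
  have hCipd : (C⁻¹).PosDef := hC.inv
  have hCiT : C⁻¹ᵀ = C⁻¹ := hCipd.1
  have hCinv : C⁻¹ * C = 1 := Matrix.nonsing_inv_mul C hC.det_pos.ne'.isUnit
  have hSt : Sᵀ = S := hS.1
  have hSipd : (S⁻¹).PosDef := hS.inv
  have hSiT : S⁻¹ᵀ = S⁻¹ := hSipd.1
  have hSinv : S⁻¹ * S = 1 := Matrix.nonsing_inv_mul S hS.det_pos.ne'.isUnit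
  have hMpsd : (Zᵀ*S*Z).PosSemidef := by
    have := Matrix.PosSemidef.conjTranspose_mul_mul_same hS.posSemidef Z
    simpa using this
  have hMt : (Zᵀ*S*Z)ᵀ = Zᵀ*S*Z := by
    rw [Matrix.transpose_mul, Matrix.transpose_mul, Matrix.transpose_transpose, hSt,
      Matrix.mul_assoc]
  have hN : (0:ℝ) < (T:ℝ) + 1 := by positivity
  have hωω : (0:ℝ) ≤ ωs ⬝ᵥ ωs := dot_self_nonneg ωs
  set u : Fin p → ℝ := Z *ᵥ abar with hu
  have hSig : ∑ t ∈ Finset.range (T+1), α (t+1) = ((T:ℝ)+1) • abar := by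
    rw [habar]
    exact (smul_inv_smul₀ (ne_of_gt hN) _).symm
  -- choice of the dual comparison point
  obtain ⟨wh, hwhu, hwhq⟩ : ∃ wh : Fin p → ℝ,
      wh ⬝ᵥ u = 2 * Real.sqrt (ωs ⬝ᵥ ωs) * Real.sqrt (u ⬝ᵥ u) ∧
      qf S⁻¹ wh ≤ 4 * lamMax S⁻¹ * (ωs ⬝ᵥ ωs) := by
    by_cases hu0 : u = 0
    · refine ⟨0, ?_, ?_⟩
      · simp [hu0]
      · have h0 : qf S⁻¹ (0 : Fin p → ℝ) = 0 := by simp [qf]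
        rw [h0]
        rcases Nat.eq_zero_or_pos p with hp0 | hp0
        · subst hp0
          simp [dotProduct]
        · have h1 : 0 ≤ lamMax S⁻¹ := lamMax_nonneg_of_pos hSipd.posSemidef hp0
          positivity
    · have hupos : 0 < u ⬝ᵥ u :=
        lt_of_le_of_ne (dot_self_nonneg u)
          (fun h => hu0 (dotProduct_self_eq_zero.mp h.symm))
      set c : ℝ := 2 * Real.sqrt (ωs ⬝ᵥ ωs) / Real.sqrt (u ⬝ᵥ u) with hcdef
      refine ⟨c • u, ?_, ?_⟩
      · rw [smul_dotProduct, smul_eq_mul, hcdef, div_mul_eq_mul_div,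
          mul_div_assoc, Real.div_sqrt]
      · have h1 : qf S⁻¹ (c • u) = c^2 * qf S⁻¹ u := qf_smul _ _ _
        have h2 : qf S⁻¹ u ≤ lamMax S⁻¹ * (u ⬝ᵥ u) := qf_le_lamMax _ _
        have hc2 : c^2 * (u ⬝ᵥ u) = 4 * (ωs ⬝ᵥ ωs) := by
          rw [hcdef, div_pow, mul_pow, Real.sq_sqrt hωω, Real.sq_sqrt hupos.le,
            div_mul_cancel₀ _ hupos.ne']
          norm_num
        have hc2' : (0:ℝ) ≤ c^2 := sq_nonneg c
        calc qf S⁻¹ (c • u) = c^2 * qf S⁻¹ u := h1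
          _ ≤ c^2 * (lamMax S⁻¹ * (u ⬝ᵥ u)) := mul_le_mul_of_nonneg_left h2 hc2'
          _ = lamMax S⁻¹ * (c^2 * (u ⬝ᵥ u)) := by ring
          _ = 4 * lamMax S⁻¹ * (ωs ⬝ᵥ ωs) := by rw [hc2]; ring
  -- the per-iteration inequality
  have key : ∀ t : ℕ,
      Hs (α (t+1)) + Hr (α (t+1)) - (Hs αs + Hr αs) + (Z *ᵥ α (t+1)) ⬝ᵥ wh
        ≤ 1/2 * qf Hm (α (t+1) - α t) - 1/2 * qf C⁻¹ (α (t+1) - α t)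
          + 1/2 * qf (Zᵀ*S*Z) (α (t+1) - α (t-d))
          - 1/2 * qf (Zᵀ*S*Z) (α (t-d))
          + (1/2 * qf C⁻¹ (αs - α t) - 1/2 * qf C⁻¹ (αs - α (t+1)))
          + (1/2 * qf S⁻¹ (ω (t-d) - wh) - 1/2 * qf S⁻¹ (ω (t+1) - wh)) := by
    intro t
    have h := per_step Z C Hm S hCiT hCipd.posSemidef hCinv hSt hSiT hSinv Hs Hr gs
      hconv_s hsmooth hr (α t) (α (t+1)) (α (t-d)) (ω (t-d)) wh (hα t) αs hαs
    rw [hω t]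
    linarith [h]
  have hsum := Finset.sum_le_sum (fun t (_ : t ∈ Finset.range (T+1)) => key t)
  simp only [Finset.sum_add_distrib, Finset.sum_sub_distrib, Finset.sum_const,
    Finset.card_range, nsmul_eq_mul] at hsum
  push_cast at hsum
  -- telescoping of the primal distance terms
  have htel : ∑ t ∈ Finset.range (T+1), 1/2 * qf C⁻¹ (αs - α t)
      - ∑ t ∈ Finset.range (T+1), 1/2 * qf C⁻¹ (αs - α (t+1))
      = 1/2 * qf C⁻¹ (αs - α 0) - 1/2 * qf C⁻¹ (αs - α (T+1)) := by
    rw [← Finset.sum_sub_distrib]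
    exact Finset.sum_range_sub' (fun s => 1/2 * qf C⁻¹ (αs - α s)) (T+1)
  have hDTnn : 0 ≤ 1/2 * qf C⁻¹ (αs - α (T+1)) := by
    have := qf_nonneg hCipd.posSemidef (αs - α (T+1)); linarith
  -- delayed dual telescoping
  have hdual : ∑ t ∈ Finset.range (T+1), 1/2 * qf S⁻¹ (ω (t-d) - wh)
      - ∑ t ∈ Finset.range (T+1), 1/2 * qf S⁻¹ (ω (t+1) - wh)
      ≤ ((d:ℝ)+1) * (1/2 * qf S⁻¹ (ω 0 - wh)) := by
    rw [← Finset.sum_sub_distrib]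
    exact delayed_sum (fun s => 1/2 * qf S⁻¹ (ω s - wh))
      (fun s => by
        have := qf_nonneg hSipd.posSemidef (ω s - wh); linarith)
      d T (by omega)
  -- bound on the initial dual distance
  have hE0 : ((d:ℝ)+1) * (1/2 * qf S⁻¹ (ω 0 - wh))
      ≤ ((d:ℝ)+1) * qf S⁻¹ (ω 0) + ((d:ℝ)+1) * (4 * lamMax S⁻¹ * (ωs ⬝ᵥ ωs)) := by
    have h1 : qf S⁻¹ (ω 0 - wh) ≤ 2 * qf S⁻¹ (ω 0) + 2 * qf S⁻¹ wh :=
      qf_sub_le hSiT hSipd.posSemidef (ω 0) wh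
    have h2 : (0:ℝ) ≤ (d:ℝ)+1 := by positivity
    nlinarith [mul_le_mul_of_nonneg_left hwhq h2, mul_le_mul_of_nonneg_left h1 h2]
  -- window bound
  have hΔnn : ∀ s : ℕ, 0 ≤ qf (Zᵀ*S*Z) (α (s+1) - α s) := fun s => qf_nonneg hMpsd _
  have hwin : ∑ t ∈ Finset.range (T+1), qf (Zᵀ*S*Z) (α (t+1) - α (t-d))
      ≤ ((d:ℝ)+1)^2 * ∑ s ∈ Finset.range (T+1), qf (Zᵀ*S*Z) (α (s+1) - α s) := by
    have h1 : ∀ t : ℕ, qf (Zᵀ*S*Z) (α (t+1) - α (t-d))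
        ≤ ((d:ℝ)+1) * ∑ s ∈ Finset.Ico (t-d) (t+1), qf (Zᵀ*S*Z) (α (s+1) - α s) := by
      intro t
      have hrep := window_repr α (t-d) (t+1) (by omega)
      have h2 := qf_sum_le (Zᵀ*S*Z) hMt hMpsd (Finset.Ico (t-d) (t+1))
        (fun i => α (i+1) - α i)
      rw [← hrep] at h2
      have hcard : (((Finset.Ico (t-d) (t+1)).card : ℕ) : ℝ) ≤ (d:ℝ)+1 := by
        rw [Nat.card_Ico]
        exact_mod_cast (by omega : (t+1) - (t-d) ≤ d+1)
      have hsnn : 0 ≤ ∑ s ∈ Finset.Ico (t-d) (t+1), qf (Zᵀ*S*Z) (α (s+1) - α s) :=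
        Finset.sum_nonneg fun s _ => hΔnn s
      exact le_trans h2 (mul_le_mul_of_nonneg_right hcard hsnn)
    calc ∑ t ∈ Finset.range (T+1), qf (Zᵀ*S*Z) (α (t+1) - α (t-d))
        ≤ ∑ t ∈ Finset.range (T+1),
            ((d:ℝ)+1) * ∑ s ∈ Finset.Ico (t-d) (t+1), qf (Zᵀ*S*Z) (α (s+1) - α s) :=
          Finset.sum_le_sum fun t _ => h1 t
      _ = ((d:ℝ)+1) * ∑ t ∈ Finset.range (T+1),
            ∑ s ∈ Finset.Ico (t-d) (t+1), qf (Zᵀ*S*Z) (α (s+1) - α s) :=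
          (Finset.mul_sum _ _ _).symm
      _ ≤ ((d:ℝ)+1) * (((d:ℝ)+1) * ∑ s ∈ Finset.range (T+1), qf (Zᵀ*S*Z) (α (s+1) - α s)) := by
          refine mul_le_mul_of_nonneg_left ?_ (by positivity)
          exact double_count (fun s => qf (Zᵀ*S*Z) (α (s+1) - α s)) hΔnn d T
      _ = ((d:ℝ)+1)^2 * ∑ s ∈ Finset.range (T+1), qf (Zᵀ*S*Z) (α (s+1) - α s) := by ring
  -- step-size condition
  have hptw : ∀ x : Fin n → ℝ, qf Hm x - qf C⁻¹ x + ((d:ℝ)+1)^2 * qf (Zᵀ*S*Z) x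
      = - qf (C⁻¹ - Hm - Zᵀ * (((1 + d : ℝ)) ^ 2 • S) * Z) x := by
    intro x
    have hsc : Zᵀ * (((1 + (d:ℝ))) ^ 2 • S) * Z = ((1 + (d:ℝ))^2) • (Zᵀ*S*Z) := by
      rw [Matrix.mul_smul, Matrix.smul_mul]
    rw [hsc]
    simp only [qf, Matrix.sub_mulVec, dotProduct_sub, Matrix.smul_mulVec,
      dotProduct_smul, smul_eq_mul]
    ring
  have hAgrp : ∑ t ∈ Finset.range (T+1), qf Hm (α (t+1) - α t)
      - ∑ t ∈ Finset.range (T+1), qf C⁻¹ (α (t+1) - α t)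
      + ((d:ℝ)+1)^2 * ∑ t ∈ Finset.range (T+1), qf (Zᵀ*S*Z) (α (t+1) - α t) ≤ 0 := by
    have h2 : ∀ t ∈ Finset.range (T+1),
        qf Hm (α (t+1) - α t) - qf C⁻¹ (α (t+1) - α t)
          + ((d:ℝ)+1)^2 * qf (Zᵀ*S*Z) (α (t+1) - α t) ≤ (0:ℝ) := by
      intro t _
      rw [hptw]
      have := qf_nonneg hstep1 (α (t+1) - α t)
      linarith
    have h3 := Finset.sum_le_sum h2
    simp only [Finset.sum_add_distrib, Finset.sum_sub_distrib, ← Finset.mul_sum,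
      Finset.sum_const_zero] at h3
    exact h3
  -- the constant-sum terms
  have hKnn : 0 ≤ ∑ t ∈ Finset.range (T+1), 1/2 * qf (Zᵀ*S*Z) (α (t-d)) :=
    Finset.sum_nonneg fun t _ => by
      have := qf_nonneg hMpsd (α (t-d)); linarith
  -- Jensen for Hs
  have hHs : ((T:ℝ)+1) * Hs abar ≤ ∑ t ∈ Finset.range (T+1), Hs (α (t+1)) := by
    have hsum2 := Finset.sum_le_sum
      (fun t (_ : t ∈ Finset.range (T+1)) => hconv_s abar (α (t+1)))
    rw [Finset.sum_add_distrib, Finset.sum_const, Finset.card_range, nsmul_eq_mul] at hsum2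
    have hzero : ∑ t ∈ Finset.range (T+1), gs abar ⬝ᵥ (α (t+1) - abar) = 0 := by
      rw [← dot_sum]
      have hs0 : ∑ t ∈ Finset.range (T+1), (α (t+1) - abar) = 0 := by
        rw [Finset.sum_sub_distrib, Finset.sum_const, Finset.card_range,
          ← Nat.cast_smul_eq_nsmul ℝ]
        push_cast
        rw [hSig, sub_self]
      rw [hs0, dotProduct_zero]
    rw [hzero] at hsum2
    push_cast at hsum2
    linarith
  -- Jensen for Hr
  have hHr : ((T:ℝ)+1) * Hr abar ≤ ∑ t ∈ Finset.range (T+1), Hr (α (t+1)) := by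
    have hw : ∀ t ∈ Finset.range (T+1), (0:ℝ) ≤ ((T:ℝ)+1)⁻¹ := fun _ _ => by positivity
    have hw1 : ∑ _t ∈ Finset.range (T+1), ((T:ℝ)+1)⁻¹ = 1 := by
      rw [Finset.sum_const, Finset.card_range, nsmul_eq_mul]
      push_cast
      field_simp
    have hmem : ∀ t ∈ Finset.range (T+1), α (t+1) ∈ Set.univ := fun _ _ => Set.mem_univ _
    have hj := hr.map_sum_le hw hw1 hmem
    have he : ∑ t ∈ Finset.range (T+1), ((T:ℝ)+1)⁻¹ • α (t+1) = abar := by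
      rw [← Finset.smul_sum, habar]
    rw [he] at hj
    simp only [smul_eq_mul] at hj
    have he2 : ∑ t ∈ Finset.range (T+1), ((T:ℝ)+1)⁻¹ * Hr (α (t+1))
        = ((T:ℝ)+1)⁻¹ * ∑ t ∈ Finset.range (T+1), Hr (α (t+1)) := by
      rw [Finset.mul_sum]
    rw [he2] at hj
    have h3 := mul_le_mul_of_nonneg_left hj hN.le
    have h4 : ((T:ℝ)+1) * (((T:ℝ)+1)⁻¹ * ∑ t ∈ Finset.range (T+1), Hr (α (t+1)))
        = ∑ t ∈ Finset.range (T+1), Hr (α (t+1)) := by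
      field_simp
    rw [h4] at h3
    exact h3
  -- the dual inner product sum
  have hdotsum : ∑ t ∈ Finset.range (T+1), (Z *ᵥ α (t+1)) ⬝ᵥ wh
      = ((T:ℝ)+1) * (wh ⬝ᵥ u) := by
    rw [← sum_dot]
    have hZ : ∑ t ∈ Finset.range (T+1), Z *ᵥ α (t+1)
        = Z *ᵥ (∑ t ∈ Finset.range (T+1), α (t+1)) := by
      have := map_sum (Matrix.mulVecLin Z) (fun t => α (t+1)) (Finset.range (T+1))
      simpa only [Matrix.mulVecLin_apply] using this.symm
    rw [hZ, hSig, Matrix.mulVec_smul, smul_dotProduct, smul_eq_mul, ← hu,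
      dotProduct_comm]
  have hdotsum2 : ∑ t ∈ Finset.range (T+1), (Z *ᵥ α (t+1)) ⬝ᵥ wh
      = ((T:ℝ)+1) * (2 * Real.sqrt (ωs ⬝ᵥ ωs) * Real.sqrt (u ⬝ᵥ u)) := by
    rw [hdotsum, hwhu]
  -- the κ slack term
  have hκnn : (0:ℝ) ≤ 4 * (d:ℝ) * κ ^ 2 / 2 := by positivity
  have hhalf1 : ∑ t ∈ Finset.range (T+1), 1/2 * qf Hm (α (t+1) - α t)
      = 1/2 * ∑ t ∈ Finset.range (T+1), qf Hm (α (t+1) - α t) := by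
    rw [Finset.mul_sum]
  have hhalf2 : ∑ t ∈ Finset.range (T+1), 1/2 * qf C⁻¹ (α (t+1) - α t)
      = 1/2 * ∑ t ∈ Finset.range (T+1), qf C⁻¹ (α (t+1) - α t) := by
    rw [Finset.mul_sum]
  have hhalf3 : ∑ t ∈ Finset.range (T+1), 1/2 * qf (Zᵀ*S*Z) (α (t+1) - α (t-d))
      = 1/2 * ∑ t ∈ Finset.range (T+1), qf (Zᵀ*S*Z) (α (t+1) - α (t-d)) := by
    rw [Finset.mul_sum]
  -- final assembly
  have hgoal : ((T:ℝ) + 1) * ((Hs abar + Hr abar) - (Hs αs + Hr αs)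
      + 2 * Real.sqrt (ωs ⬝ᵥ ωs) * Real.sqrt (u ⬝ᵥ u))
      = ((T:ℝ)+1) * Hs abar + ((T:ℝ)+1) * Hr abar
        - ((T:ℝ)+1) * (Hs αs + Hr αs)
        + ((T:ℝ)+1) * (2 * Real.sqrt (ωs ⬝ᵥ ωs) * Real.sqrt (u ⬝ᵥ u)) := by ring
  rw [hgoal]
  linarith [hsum, htel, hDTnn, hdual, hE0, hwin, hAgrp, hKnn, hHs, hHr, hdotsum, hκnn,
    hwhu, hhalf1, hhalf2, hhalf3, hdotsum2]
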